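/- arXiv:1105.2911 — 2 statements merged into one kernel-verified Lean document; each statement's English description precedes it below -/
import Mathlib

section
/- Consider the multivariate linear model Y = X·B + E, where X is a real N×p matrix with XᵀX invertible, B is a deterministic real p×r matrix, and E : Ω → (N×r real matrices) is a random matrix with square-integrable entries, entrywise mean zero, and second moments E(E_{ik} E_{jl}) = δ_{ij} Σ_{kl} for a fixed real r×r matrix Σ. Then, with H = X(XᵀX)⁻¹Xᵀ, the entrywise expectation of Yᵀ(I_N − H)Y equals (N − p) · Σ; in particular, if N > p then Σ̂ = Yᵀ(I_N − H)Y/(N − p) is an unbiased estimator of Σ. -/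
open Matrix MeasureTheory

lemma l2_mul_integrable {Ω : Type*} [MeasureSpace Ω] {f g : Ω → ℝ}
    (hf : MemLp f 2) (hg : MemLp g 2) : Integrable (fun ω => f ω * g ω) := by
  have h := (((hf.add hg).integrable_sq.sub hf.integrable_sq).sub hg.integrable_sq).div_const 2
  have heq : (fun ω => f ω * g ω) =
      fun ω => (((f + g) ω) ^ 2 - f ω ^ 2 - g ω ^ 2) / 2 := by
    funext ω; simp [Pi.add_apply]; ring
  rw [heq]; exact h

/-- In the multivariate linear model `Y = X B + E` with `XᵀX` invertible, where the random error
matrix `E` has square-integrable entries, entrywise mean zero, and second moments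
`E(E_{ik} E_{jl}) = δ_{ij} Σ_{kl}`, the entrywise expectation of `Yᵀ (I_N - H) Y`, with
`H = X (XᵀX)⁻¹ Xᵀ`, equals `(N - p) • Σ`; in particular, if `N > p` then
`Σ̂ = Yᵀ (I_N - H) Y / (N - p)` is an unbiased estimator of `Σ`. -/
theorem residual_covariance_unbiased {Ω : Type*} [MeasureSpace Ω]
    [IsProbabilityMeasure (volume : Measure Ω)]
    (N p r : ℕ) (X : Matrix (Fin N) (Fin p) ℝ) (hX : Invertible (Xᵀ * X))
    (B : Matrix (Fin p) (Fin r) ℝ) (S : Matrix (Fin r) (Fin r) ℝ)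
    (Err : Ω → Matrix (Fin N) (Fin r) ℝ)
    (hL2 : ∀ i k, MemLp (fun ω => Err ω i k) 2)
    (hMean : ∀ i k, (∫ ω, Err ω i k) = 0)
    (hCov : ∀ i j k l, (∫ ω, Err ω i k * Err ω j l) =
      (if i = j then (1 : ℝ) else 0) * S k l)
    (Y : Ω → Matrix (Fin N) (Fin r) ℝ) (hY : ∀ ω, Y ω = X * B + Err ω)
    (H : Matrix (Fin N) (Fin N) ℝ) (hH : H = X * (Xᵀ * X)⁻¹ * Xᵀ) :
    (∀ a b, (∫ ω, ((Y ω)ᵀ * ((1 : Matrix (Fin N) (Fin N) ℝ) - H) * Y ω) a b) =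
      ((N : ℝ) - (p : ℝ)) * S a b) ∧
    (N > p → ∀ a b,
      (∫ ω, (((N : ℝ) - (p : ℝ))⁻¹ • ((Y ω)ᵀ * ((1 : Matrix (Fin N) (Fin N) ℝ) - H) * Y ω)) a b)
        = S a b) := by
  set M : Matrix (Fin N) (Fin N) ℝ := (1 : Matrix (Fin N) (Fin N) ℝ) - H with hMdef
  have hHX : H * X = X := by
    rw [hH, Matrix.mul_assoc, Matrix.mul_assoc, Matrix.inv_mul_of_invertible, Matrix.mul_one]
  have hXH : Xᵀ * H = Xᵀ := by
    rw [hH, ← Matrix.mul_assoc, ← Matrix.mul_assoc, Matrix.mul_inv_of_invertible,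
      Matrix.one_mul]
  have hMX : M * X = 0 := by rw [hMdef, Matrix.sub_mul, Matrix.one_mul, hHX, sub_self]
  have hXM : Xᵀ * M = 0 := by rw [hMdef, Matrix.mul_sub, Matrix.mul_one, hXH, sub_self]
  -- trace of M is N - p
  have htrH : H.trace = (p : ℝ) := by
    rw [hH, Matrix.mul_assoc, Matrix.trace_mul_comm, Matrix.mul_assoc,
      Matrix.inv_mul_of_invertible, Matrix.trace_one]
    simp
  have htrM : M.trace = (N : ℝ) - (p : ℝ) := by
    rw [hMdef, Matrix.trace_sub, Matrix.trace_one, htrH]; simp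
  -- pointwise: YᵀMY = EᵀME
  have hYMY : ∀ ω, (Y ω)ᵀ * M * Y ω = (Err ω)ᵀ * M * Err ω := by
    intro ω
    rw [hY]
    have h1 : M * (X * B + Err ω) = M * Err ω := by
      rw [Matrix.mul_add, ← Matrix.mul_assoc, hMX, Matrix.zero_mul, zero_add]
    have h2 : (X * B + Err ω)ᵀ * M = (Err ω)ᵀ * M := by
      rw [Matrix.transpose_add, Matrix.add_mul, Matrix.transpose_mul,
        Matrix.mul_assoc, hXM, Matrix.mul_zero, zero_add]
    rw [Matrix.mul_assoc, h1, ← Matrix.mul_assoc]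
    rw [Matrix.mul_assoc, ← h1, ← Matrix.mul_assoc, h2, Matrix.mul_assoc, h1,
      ← Matrix.mul_assoc]
  have key : ∀ a b, (∫ ω, ((Y ω)ᵀ * M * Y ω) a b) = ((N : ℝ) - (p : ℝ)) * S a b := by
    intro a b
    have hentry : ∀ ω, ((Y ω)ᵀ * M * Y ω) a b =
        ∑ j : Fin N, ∑ i : Fin N, Err ω i a * M i j * Err ω j b := by
      intro ω
      rw [hYMY ω]
      simp [Matrix.mul_apply, Matrix.transpose_apply, Finset.sum_mul]
    have hint : ∀ (j i : Fin N),
        Integrable (fun ω => Err ω i a * M i j * Err ω j b) := by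
      intro j i
      have : (fun ω => Err ω i a * M i j * Err ω j b) =
          fun ω => M i j * (Err ω i a * Err ω j b) := by funext ω; ring
      rw [this]
      exact ((l2_mul_integrable (hL2 i a) (hL2 j b))).const_mul _
    calc (∫ ω, ((Y ω)ᵀ * M * Y ω) a b)
        = ∫ ω, ∑ j : Fin N, ∑ i : Fin N, Err ω i a * M i j * Err ω j b := by
          congr 1; funext ω; exact hentry ω
      _ = ∑ j : Fin N, ∑ i : Fin N, ∫ ω, Err ω i a * M i j * Err ω j b := by
          rw [integral_finset_sum _ (fun j _ => integrable_finset_sum _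
            (fun i _ => hint j i))]
          exact Finset.sum_congr rfl fun j _ =>
            integral_finset_sum _ (fun i _ => hint j i)
      _ = ∑ j : Fin N, ∑ i : Fin N, M i j * ((if i = j then (1:ℝ) else 0) * S a b) := by
          refine Finset.sum_congr rfl fun j _ => Finset.sum_congr rfl fun i _ => ?_
          have : (fun ω => Err ω i a * M i j * Err ω j b) =
              fun ω => M i j * (Err ω i a * Err ω j b) := by funext ω; ring
          rw [this, integral_const_mul, hCov i j a b]
      _ = ∑ j : Fin N, M j j * S a b := by
          refine Finset.sum_congr rfl fun j _ => ?_
          rw [Finset.sum_eq_single j]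
          · simp
          · intro i _ hij; simp [hij]
          · simp
      _ = M.trace * S a b := by rw [Matrix.trace]; simp [Matrix.diag, Finset.sum_mul]
      _ = ((N : ℝ) - (p : ℝ)) * S a b := by rw [htrM]
  refine ⟨key, fun hNp a b => ?_⟩
  have hne : ((N : ℝ) - (p : ℝ)) ≠ 0 := by
    have : (p : ℝ) < (N : ℝ) := by exact_mod_cast hNp
    linarith
  have : (∫ ω, (((N : ℝ) - (p : ℝ))⁻¹ • ((Y ω)ᵀ * M * Y ω)) a b)
      = ((N : ℝ) - (p : ℝ))⁻¹ * ∫ ω, ((Y ω)ᵀ * M * Y ω) a b := by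
    simp_rw [Matrix.smul_apply, smul_eq_mul]
    exact integral_const_mul _ _
  rw [this, key a b, ← mul_assoc, inv_mul_cancel₀ hne, one_mul]
end

section
/- The cumulative distribution function of the standard Gaussian measure, cdf(gaussianReal 0 1), is strictly monotone increasing on ℝ. Consequently, for functions μ : ℝⁿ → ℝ and s : ℝⁿ → ℝ with s(x) > 0 for all x, a fixed target τ ∈ ℝ, a set 𝔛 ⊆ ℝⁿ, and x* ∈ 𝔛: x* minimizes x ↦ cdf(gaussianReal (μ x) (s x)²)(τ) over 𝔛 if and only if x* minimizes x ↦ (τ − μ(x))/s(x) over 𝔛. (This is the equivalence between the multiobjective minimum-risk P-model and its deterministic equivalent program.) -/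
open MeasureTheory ProbabilityTheory

open Set in
lemma stdGaussian_cdf_strictMono : StrictMono (fun t : ℝ => cdf (gaussianReal 0 1) t) := by
  intro a b hab
  simp only
  have h1 : IsProbabilityMeasure (gaussianReal 0 1) := inferInstance
  rw [cdf_eq_real, cdf_eq_real, measureReal_def, measureReal_def]
  have hsub : Iic a ⊆ Iic b := Iic_subset_Iic.mpr hab.le
  have hfin : ∀ s : Set ℝ, gaussianReal 0 1 s ≠ ⊤ := fun s => measure_ne_top _ s
  have hIoc : 0 < gaussianReal 0 1 (Ioc a b) := by
    rw [pos_iff_ne_zero]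
    intro h0
    have := (gaussianReal_absolutelyContinuous' 0 one_ne_zero) h0
    rw [Real.volume_Ioc] at this
    simp only [ENNReal.ofReal_eq_zero, sub_nonpos] at this
    exact absurd this (not_le.mpr hab)
  have hunion : gaussianReal 0 1 (Iic b) = gaussianReal 0 1 (Iic a) + gaussianReal 0 1 (Ioc a b) := by
    rw [← measure_union (Iic_disjoint_Ioc le_rfl) measurableSet_Ioc,
      Iic_union_Ioc_eq_Iic hab.le]
  rw [ENNReal.toReal_lt_toReal (hfin _) (hfin (Iic b)), hunion]
  exact ENNReal.lt_add_right (hfin _) hIoc.ne'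

lemma gaussian_cdf_eq (m σ τ : ℝ) (hσ : 0 < σ) :
    cdf (gaussianReal m ((σ.toNNReal) ^ 2)) τ = cdf (gaussianReal 0 1) ((τ - m) / σ) := by
  have hmap : (gaussianReal 0 1).map (fun x => σ * x + m)
      = gaussianReal m ((σ.toNNReal) ^ 2) := by
    have h1 : (gaussianReal 0 1).map (σ * ·) = gaussianReal (σ * 0) (⟨σ ^ 2, sq_nonneg _⟩ * 1) :=
      gaussianReal_map_const_mul σ
    have h2 : (fun x => σ * x + m) = (· + m) ∘ (σ * ·) := rfl
    rw [h2, ← Measure.map_map (measurable_id'.add_const _) (measurable_const_mul _), h1,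
      gaussianReal_map_add_const]
    congr 1
    · ring
    · ext
      simp [Real.coe_toNNReal _ hσ.le, sq]
      exact mul_one (σ * σ)
  rw [cdf_eq_real, cdf_eq_real, measureReal_def, measureReal_def, ← hmap,
    Measure.map_apply (by fun_prop) measurableSet_Iic]
  congr 1
  have : (fun x => σ * x + m) ⁻¹' Set.Iic τ = Set.Iic ((τ - m) / σ) := by
    ext x
    simp only [Set.mem_preimage, Set.mem_Iic]
    rw [le_div_iff₀ hσ]
    constructor <;> intro h <;> nlinarith
  rw [this]

/-- The standard Gaussian cdf is strictly monotone; consequently, for `μ, s : ℝⁿ → ℝ` with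
`s x > 0`, a target `τ ∈ ℝ`, and `x⋆ ∈ 𝔛 ⊆ ℝⁿ`, the point `x⋆` minimizes
`x ↦ cdf (gaussianReal (μ x) ((s x)²)) τ` over `𝔛` if and only if it minimizes
`x ↦ (τ - μ x) / s x` over `𝔛`. -/
theorem gaussian_cdf_min_iff {n : ℕ} :
    StrictMono (fun t : ℝ => cdf (gaussianReal 0 1) t) ∧
    ∀ (μ s : (Fin n → ℝ) → ℝ), (∀ x, 0 < s x) → ∀ (τ : ℝ) (𝔛 : Set (Fin n → ℝ))
      (xstar : Fin n → ℝ), xstar ∈ 𝔛 →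
      ((∀ x ∈ 𝔛, cdf (gaussianReal (μ xstar) ((s xstar).toNNReal ^ 2)) τ ≤
          cdf (gaussianReal (μ x) ((s x).toNNReal ^ 2)) τ) ↔
        (∀ x ∈ 𝔛, (τ - μ xstar) / s xstar ≤ (τ - μ x) / s x)) := by
  refine ⟨stdGaussian_cdf_strictMono, fun μ s hs τ 𝔛 xstar _ => ?_⟩
  have key : ∀ x, cdf (gaussianReal (μ x) ((s x).toNNReal ^ 2)) τ
      = cdf (gaussianReal 0 1) ((τ - μ x) / s x) := fun x =>
    gaussian_cdf_eq (μ x) (s x) τ (hs x)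
  simp_rw [key]
  constructor <;> intro h x hx <;> have := h x hx
  · exact stdGaussian_cdf_strictMono.le_iff_le.mp this
  · exact stdGaussian_cdf_strictMono.le_iff_le.mpr this
end
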